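/- For every finite simple graph G there exists a finite simple graph H* and a coalition partition π* of H* such that the coalition graph CG(H*, π*) is isomorphic to G. -/

import Mathlib

open scoped Classical

/-- A dominating set (as a finset): every vertex outside `S` has a neighbor in `S`. -/
def IsDomSet {V : Type*} (G : SimpleGraph V) (S : Finset V) : Prop :=
  ∀ v, v ∉ S → ∃ u ∈ S, G.Adj u v

/-- Two (distinct) sets form a coalition: neither dominates, but their union does. -/
def IsCoalition {V : Type*} (G : SimpleGraph V) (A B : Finset V) : Prop :=
  A ≠ B ∧ ¬ IsDomSet G A ∧ ¬ IsDomSet G B ∧ IsDomSet G (A ∪ B)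

/-- A coalition partition (c-partition) of the vertex set of `G`. -/
def IsCPartition {V : Type*} [Fintype V] (G : SimpleGraph V) (π : Finset (Finset V)) : Prop :=
  (∀ A ∈ π, A.Nonempty) ∧
  (∀ A ∈ π, ∀ B ∈ π, A ≠ B → Disjoint A B) ∧
  (∀ v : V, ∃ A ∈ π, v ∈ A) ∧
  (∀ A ∈ π, (∃ v, A = {v} ∧ IsDomSet G A) ∨ ∃ B ∈ π, IsCoalition G A B)

/-- Number of distinct (unordered) coalitions in the partition `π`. -/
noncomputable def cpCount {V : Type*} [Fintype V] (G : SimpleGraph V)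
    (π : Finset (Finset V)) : ℕ :=
  ((π ×ˢ π).filter (fun p => IsCoalition G p.1 p.2)).card / 2

/-- The coalition count `c(G)`: maximum number of distinct coalitions over c-partitions. -/
noncomputable def coalitionCount {V : Type*} [Fintype V] (G : SimpleGraph V) : ℕ :=
  sSup {k | ∃ π, IsCPartition G π ∧ k = cpCount G π}

/-- The coalition number `C(G)`: maximum order of a c-partition. -/
noncomputable def coalitionNumber {V : Type*} [Fintype V] (G : SimpleGraph V) : ℕ :=
  sSup {k | ∃ π, IsCPartition G π ∧ k = π.card}

/-- The coalition graph `CG(G, π)`. -/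
def coalitionGraph {V : Type*} (G : SimpleGraph V) (π : Finset (Finset V)) :
    SimpleGraph {A // A ∈ π} where
  Adj A B := IsCoalition G A.1 B.1
  symm := by
    refine ⟨?_⟩
    rintro A B ⟨h1, h2, h3, h4⟩
    exact ⟨fun h => h1 h.symm, h3, h2, by rwa [Finset.union_comm]⟩
  loopless := by
    refine ⟨?_⟩
    rintro A ⟨h1, -⟩
    exact h1 rfl

/-- The set of full vertices (vertices of degree `n - 1`). -/
noncomputable def fullVertices {V : Type*} [Fintype V] (G : SimpleGraph V) : Finset V :=
  Finset.univ.filter (fun v => G.degree v = Fintype.card V - 1)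

/-- The domatic number: maximum order of a partition into dominating sets. -/
noncomputable def domaticNumber {V : Type*} [Fintype V] (G : SimpleGraph V) : ℕ :=
  sSup {k | ∃ P : Finset (Finset V),
    (∀ A ∈ P, A.Nonempty) ∧
    (∀ A ∈ P, ∀ B ∈ P, A ≠ B → Disjoint A B) ∧
    (∀ v : V, ∃ A ∈ P, v ∈ A) ∧
    (∀ A ∈ P, IsDomSet G A) ∧ k = P.card}

/-- The independence number of `G`. -/
noncomputable def indepNumber {V : Type*} [Fintype V] (G : SimpleGraph V) : ℕ :=
  sSup {k | ∃ s : Finset V, (∀ a ∈ s, ∀ b ∈ s, ¬ G.Adj a b) ∧ k = s.card}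

section Transport

variable {W : Type} [Fintype W] {n : ℕ}

/-- Push a graph across an equivalence. -/
def mapGraph (H : SimpleGraph W) (e : W ≃ Fin n) : SimpleGraph (Fin n) where
  Adj a b := H.Adj (e.symm a) (e.symm b)
  symm := ⟨fun a b h => h.symm⟩
  loopless := ⟨fun a h => H.irrefl h⟩

lemma isDomSet_image (H : SimpleGraph W) (e : W ≃ Fin n) (S : Finset W) :
    IsDomSet (mapGraph H e) (S.image e) ↔ IsDomSet H S := by
  constructor
  · intro h v hv
    obtain ⟨u, hu, hadj⟩ := h (e v) (by simp [Finset.mem_image, e.injective.eq_iff]; exact hv)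
    obtain ⟨u', hu', rfl⟩ := Finset.mem_image.mp hu
    refine ⟨u', hu', ?_⟩
    simpa [mapGraph] using hadj
  · intro h v hv
    have hv' : e.symm v ∉ S := by
      intro hc
      exact hv (Finset.mem_image.mpr ⟨e.symm v, hc, by simp⟩)
    obtain ⟨u, hu, hadj⟩ := h _ hv'
    refine ⟨e u, Finset.mem_image_of_mem _ hu, ?_⟩
    simpa [mapGraph] using hadj

lemma mem_iff_dom {U : Type*} (G : SimpleGraph U) {S T : Finset U}
    (h : ∀ v, v ∈ S ↔ v ∈ T) : IsDomSet G S ↔ IsDomSet G T := by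
  constructor <;> intro hd v hv
  · obtain ⟨u, hu, ha⟩ := hd v (fun hc => hv ((h v).mp hc))
    exact ⟨u, (h u).mp hu, ha⟩
  · obtain ⟨u, hu, ha⟩ := hd v (fun hc => hv ((h v).mpr hc))
    exact ⟨u, (h u).mpr hu, ha⟩

lemma isCoalition_image (H : SimpleGraph W) (e : W ≃ Fin n) (A B : Finset W) :
    IsCoalition (mapGraph H e) (A.image e) (B.image e) ↔ IsCoalition H A B := by
  have himg : Function.Injective (fun S : Finset W => S.image e) :=
    Finset.image_injective e.injective
  unfold IsCoalition
  constructor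
  · rintro ⟨h1, h2, h3, h4⟩
    refine ⟨fun h => h1 (by rw [h]), fun h => h2 ((isDomSet_image H e A).mpr h),
      fun h => h3 ((isDomSet_image H e B).mpr h),
      (isDomSet_image H e (A ∪ B)).mp ((mem_iff_dom _ ?_).mp h4)⟩
    intro x
    simp only [Finset.mem_union, Finset.mem_image]
    constructor
    · rintro (⟨a, ha, rfl⟩ | ⟨a, ha, rfl⟩)
      · exact ⟨a, Or.inl ha, rfl⟩
      · exact ⟨a, Or.inr ha, rfl⟩
    · rintro ⟨a, (ha | ha), rfl⟩
      · exact Or.inl ⟨a, ha, rfl⟩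
      · exact Or.inr ⟨a, ha, rfl⟩
  · rintro ⟨h1, h2, h3, h4⟩
    refine ⟨fun h => h1 (himg h), fun h => h2 ((isDomSet_image H e A).mp h),
      fun h => h3 ((isDomSet_image H e B).mp h),
      (mem_iff_dom _ ?_).mpr ((isDomSet_image H e (A ∪ B)).mpr h4)⟩
    intro x
    simp only [Finset.mem_union, Finset.mem_image]
    constructor
    · rintro (⟨a, ha, rfl⟩ | ⟨a, ha, rfl⟩)
      · exact ⟨a, Or.inl ha, rfl⟩
      · exact ⟨a, Or.inr ha, rfl⟩
    · rintro ⟨a, (ha | ha), rfl⟩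
      · exact Or.inl ⟨a, ha, rfl⟩
      · exact Or.inr ⟨a, ha, rfl⟩

theorem transport (H : SimpleGraph W) (π : Finset (Finset W)) (h : IsCPartition H π) :
    ∃ (n : ℕ) (H' : SimpleGraph (Fin n)) (π' : Finset (Finset (Fin n))),
      IsCPartition H' π' ∧ Nonempty (coalitionGraph H' π' ≃g coalitionGraph H π) := by
  obtain ⟨h1, h2, h3, h4⟩ := h
  set n := Fintype.card W
  set e : W ≃ Fin n := Fintype.equivFin W with he
  refine ⟨n, mapGraph H e, π.image (fun S => S.image e), ⟨?_, ?_, ?_, ?_⟩, ⟨?_⟩⟩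
  · rintro A hA
    obtain ⟨B, hB, rfl⟩ := Finset.mem_image.mp hA
    exact (h1 B hB).image e
  · rintro A hA B hB hne
    obtain ⟨A', hA', rfl⟩ := Finset.mem_image.mp hA
    obtain ⟨B', hB', rfl⟩ := Finset.mem_image.mp hB
    have : A' ≠ B' := fun h => hne (by rw [h])
    exact (Finset.disjoint_image e.injective).mpr (h2 A' hA' B' hB' this)
  · intro v
    obtain ⟨A, hA, hv⟩ := h3 (e.symm v)
    exact ⟨A.image e, Finset.mem_image_of_mem _ hA,
      by simpa using Finset.mem_image_of_mem e hv⟩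
  · rintro A hA
    obtain ⟨A', hA', rfl⟩ := Finset.mem_image.mp hA
    rcases h4 A' hA' with ⟨v, rfl, hdom⟩ | ⟨B, hB, hco⟩
    · exact Or.inl ⟨e v, by simp, (isDomSet_image H e _).mpr hdom⟩
    · exact Or.inr ⟨B.image e, Finset.mem_image_of_mem _ hB,
        (isCoalition_image H e A' B).mpr hco⟩
  · -- iso between the two coalition graphs
    have himg : Function.Injective (fun S : Finset W => S.image e) :=
      Finset.image_injective e.injective
    refine SimpleGraph.Iso.symm ⟨Equiv.ofBijective
      (fun A : {A // A ∈ π} => (⟨A.1.image e, Finset.mem_image_of_mem _ A.2⟩ :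
        {A // A ∈ π.image (fun S => S.image e)})) ⟨?_, ?_⟩, ?_⟩
    · rintro ⟨A, hA⟩ ⟨B, hB⟩ hab
      have : A.image e = B.image e := congrArg Subtype.val hab
      exact Subtype.ext (himg this)
    · rintro ⟨A, hA⟩
      obtain ⟨A', hA', rfl⟩ := Finset.mem_image.mp hA
      exact ⟨⟨A', hA'⟩, rfl⟩
    · rintro ⟨A, hA⟩ ⟨B, hB⟩
      exact isCoalition_image H e A B

end Transport

section Main

variable {V : Type} [Fintype V] (G : SimpleGraph V)

abbrev Gad := {p : V × V // (∃ k, G.Adj p.1 k) ∧ (∃ k, G.Adj p.2 k) ∧ ¬ G.Adj p.1 p.2}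

abbrev Wt := V ⊕ Gad G

noncomputable def fA : Wt G → V
  | Sum.inl i => i
  | Sum.inr x => Classical.choose x.2.1

lemma fA_inr_adj (x : Gad G) : G.Adj x.1.1 (fA G (Sum.inr x)) := Classical.choose_spec x.2.1

def badR : Wt G → Wt G → Prop
  | Sum.inl _, _ => False
  | Sum.inr x, w => fA G w = x.1.1 ∨ fA G w = x.1.2

noncomputable def HG : SimpleGraph (Wt G) where
  Adj u v := u ≠ v ∧ ¬ badR G u v ∧ ¬ badR G v u
  symm := by refine ⟨?_⟩; rintro u v ⟨h1, h2, h3⟩; exact ⟨Ne.symm h1, h3, h2⟩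
  loopless := ⟨fun u h => h.1 rfl⟩

noncomputable def PA (i : V) : Finset (Wt G) := Finset.univ.filter (fun w => fA G w = i)

lemma mem_PA {i : V} {w : Wt G} : w ∈ PA G i ↔ fA G w = i := by
  simp [PA]

lemma inl_mem_PA (i : V) : Sum.inl i ∈ PA G i := by rw [mem_PA]; rfl

/-- for isolated i, the fiber is the singleton {inl i} -/
lemma PA_isolated {i : V} (hi : ¬ ∃ k, G.Adj i k) : PA G i = {Sum.inl i} := by
  ext w
  simp only [mem_PA, Finset.mem_singleton]
  constructor
  · intro h
    cases w with
    | inl j => simp [fA] at h; rw [h]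
    | inr x =>
        exfalso
        apply hi
        have := fA_inr_adj G x
        rw [h] at this
        exact ⟨x.1.1, this.symm⟩
  · rintro rfl; simp [fA]

lemma dom_isolated {i : V} (hi : ¬ ∃ k, G.Adj i k) : IsDomSet (HG G) (PA G i) := by
  rw [PA_isolated G hi]
  intro v hv
  refine ⟨Sum.inl i, Finset.mem_singleton_self _, show _ ≠ _ ∧ _ from ⟨?_, ?_, ?_⟩⟩
  · intro h; rw [h] at hv; simp at hv
  · simp [badR]
  · cases v with
    | inl j => simp [badR]
    | inr x =>
        simp only [badR, fA]
        rintro (h | h)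
        · exact hi (by rw [h]; exact x.2.1)
        · exact hi (by rw [h]; exact x.2.2.1)

lemma not_dom_PA {i : V} (hi : ∃ k, G.Adj i k) : ¬ IsDomSet (HG G) (PA G i) := by
  intro hdom
  set x : Gad G := ⟨(i, i), hi, hi, G.irrefl⟩ with hx
  have hxadj : G.Adj i (fA G (Sum.inr x)) := fA_inr_adj G x
  have hxne : fA G (Sum.inr x) ≠ i := fun h => G.irrefl (h ▸ hxadj)
  obtain ⟨u, hu, hadj⟩ := hdom (Sum.inr x) (by rw [mem_PA]; exact hxne)
  exact (show _ ≠ _ ∧ ¬ badR G _ _ ∧ ¬ badR G _ _ from hadj).2.2 (Or.inl (mem_PA G |>.mp hu))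

lemma not_dom_union {i j : V} (hi : ∃ k, G.Adj i k) (hj : ∃ k, G.Adj j k)
    (hnadj : ¬ G.Adj i j) (S : Finset (Wt G))
    (hS : ∀ w, w ∈ S ↔ (fA G w = i ∨ fA G w = j)) : ¬ IsDomSet (HG G) S := by
  intro hdom
  set x : Gad G := ⟨(i, j), hi, hj, hnadj⟩ with hx
  have hxadj : G.Adj i (fA G (Sum.inr x)) := fA_inr_adj G x
  have hxnei : fA G (Sum.inr x) ≠ i := fun h => G.irrefl (h ▸ hxadj)
  have hxnej : fA G (Sum.inr x) ≠ j := fun h => hnadj (h ▸ hxadj)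
  obtain ⟨u, hu, hadj⟩ := hdom (Sum.inr x) (by
    rw [hS]
    rintro (h | h)
    · exact hxnei h
    · exact hxnej h)
  exact (show _ ≠ _ ∧ ¬ badR G _ _ ∧ ¬ badR G _ _ from hadj).2.2 ((hS u).mp hu)

lemma dom_union {i j : V} (hadj : G.Adj i j) (S : Finset (Wt G))
    (hS : ∀ w, w ∈ S ↔ (fA G w = i ∨ fA G w = j)) : IsDomSet (HG G) S := by
  intro v hv
  rw [hS] at hv
  push_neg at hv
  have hvi : fA G v ≠ i := hv.1
  have hvj : fA G v ≠ j := hv.2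
  have key : ¬ badR G v (Sum.inl i) ∨ ¬ badR G v (Sum.inl j) := by
    cases v with
    | inl l => left; simp [badR]
    | inr x =>
        by_contra hc
        push_neg at hc
        obtain ⟨h1, h2⟩ := hc
        simp only [badR, fA] at h1 h2
        rcases h1 with h1 | h1 <;> rcases h2 with h2 | h2
        · exact G.irrefl (h1 ▸ h2 ▸ hadj)
        · exact x.2.2.2 (h1 ▸ h2 ▸ hadj)
        · exact x.2.2.2 (h2 ▸ h1 ▸ hadj.symm)
        · exact G.irrefl (h1 ▸ h2 ▸ hadj)
  rcases key with hk | hk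
  · refine ⟨Sum.inl i, (hS _).mpr (Or.inl (by simp [fA])), show _ ≠ _ ∧ _ from ⟨?_, ?_, hk⟩⟩
    · intro h; exact hvi (by rw [← h]; simp [fA])
    · simp [badR]
  · refine ⟨Sum.inl j, (hS _).mpr (Or.inr (by simp [fA])), show _ ≠ _ ∧ _ from ⟨?_, ?_, hk⟩⟩
    · intro h; exact hvj (by rw [← h]; simp [fA])
    · simp [badR]

lemma PA_injective : Function.Injective (PA G) := by
  intro i j h
  have := inl_mem_PA G i
  rw [h, mem_PA] at this
  simpa [fA] using this

lemma coalition_of_adj {i j : V} (hadj : G.Adj i j) :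
    IsCoalition (HG G) (PA G i) (PA G j) := by
  refine ⟨fun h => G.ne_of_adj hadj (PA_injective G h), ?_, ?_, ?_⟩
  · exact not_dom_PA G ⟨j, hadj⟩
  · exact not_dom_PA G ⟨i, hadj.symm⟩
  · exact dom_union G hadj _ (fun w => by simp [Finset.mem_union, mem_PA])

lemma adj_of_coalition {i j : V} (hco : IsCoalition (HG G) (PA G i) (PA G j)) :
    G.Adj i j := by
  obtain ⟨hne, hdi, hdj, hdu⟩ := hco
  by_contra hnadj
  by_cases hi : ∃ k, G.Adj i k
  · by_cases hj : ∃ k, G.Adj j k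
    · exact not_dom_union G hi hj hnadj _
        (fun w => by simp [Finset.mem_union, mem_PA]) hdu
    · exact hdj (dom_isolated G hj)
  · exact hdi (dom_isolated G hi)

noncomputable def piG : Finset (Finset (Wt G)) := Finset.univ.image (PA G)

lemma cpartition_piG : IsCPartition (HG G) (piG G) := by
  refine ⟨?_, ?_, ?_, ?_⟩
  · rintro A hA
    obtain ⟨i, -, rfl⟩ := Finset.mem_image.mp hA
    exact ⟨Sum.inl i, inl_mem_PA G i⟩
  · rintro A hA B hB hne
    obtain ⟨i, -, rfl⟩ := Finset.mem_image.mp hA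
    obtain ⟨j, -, rfl⟩ := Finset.mem_image.mp hB
    rw [Finset.disjoint_left]
    intro w hwi hwj
    rw [mem_PA] at hwi hwj
    exact hne (by rw [← hwi, ← hwj])
  · intro v
    exact ⟨PA G (fA G v), Finset.mem_image_of_mem _ (Finset.mem_univ _),
      (mem_PA G).mpr rfl⟩
  · rintro A hA
    obtain ⟨i, -, rfl⟩ := Finset.mem_image.mp hA
    by_cases hi : ∃ k, G.Adj i k
    · obtain ⟨k, hk⟩ := hi
      exact Or.inr ⟨PA G k, Finset.mem_image_of_mem _ (Finset.mem_univ _),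
        coalition_of_adj G hk⟩
    · exact Or.inl ⟨Sum.inl i, PA_isolated G hi, dom_isolated G hi⟩

noncomputable def isoG : coalitionGraph (HG G) (piG G) ≃g G := by
  refine SimpleGraph.Iso.symm ⟨Equiv.ofBijective
    (fun i : V => (⟨PA G i, Finset.mem_image_of_mem _ (Finset.mem_univ i)⟩ :
      {A // A ∈ piG G})) ⟨?_, ?_⟩, ?_⟩
  · intro i j h
    exact PA_injective G (congrArg Subtype.val h)
  · rintro ⟨A, hA⟩
    obtain ⟨i, -, rfl⟩ := Finset.mem_image.mp hA
    exact ⟨i, rfl⟩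
  · intro i j
    show IsCoalition (HG G) (PA G i) (PA G j) ↔ G.Adj i j
    exact ⟨adj_of_coalition G, coalition_of_adj G⟩

end Main


/-- For every finite simple graph `G` there exists a finite simple graph `H*`
and a coalition partition `π*` of `H*` such that `CG(H*, π*) ≅ G`. -/
theorem stmt_0 {V : Type} [Fintype V] (G : SimpleGraph V) :
    ∃ (n : ℕ) (H : SimpleGraph (Fin n)) (π : Finset (Finset (Fin n))),
      IsCPartition H π ∧ Nonempty (coalitionGraph H π ≃g G) := by
  obtain ⟨n, H', π', hcp, ⟨iso⟩⟩ := transport (HG G) (piG G) (cpartition_piG G)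
  exact ⟨n, H', π', hcp, ⟨(isoG G).comp iso⟩⟩
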